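/- Let n ≥ 2, M > 0, and let x ∈ ℝⁿ with ‖x‖ ≥ 5M, d > 0 with d ≥ 3M, and suppose the balls B_{2M}(0) and B_{d/2}(x) are disjoint. Define A₂ = {ζ ∈ B_{2‖x‖}(0) \ B_{2M}(0) : ‖ζ‖ ≤ ‖ζ−x‖}. Then ∫_{A₂} dm(ζ)/(‖ζ‖ⁿ·‖ζ−x‖ⁿ) ≤ C(n)·(1/‖x‖ⁿ)·ln(‖x‖/M) for a constant C(n) depending only on n. -/

import Mathlib

open MeasureTheory

/-- For `‖x‖ ≥ 5M`, `d ≥ 3M` and `A₂ = {ζ ∈ B_{2‖x‖}(0) \ B_{2M}(0) : ‖ζ‖ ≤ ‖ζ−x‖}`,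
`∫_{A₂} dm(ζ)/(‖ζ‖ⁿ‖ζ−x‖ⁿ) ≤ C(n)·(1/‖x‖ⁿ)·ln(‖x‖/M)`. -/
theorem stmt19 (n : ℕ) (hn : 2 ≤ n) :
    ∃ C : ℝ, 0 < C ∧ ∀ M : ℝ, 0 < M → ∀ x : EuclideanSpace ℝ (Fin n), 5 * M ≤ ‖x‖ →
      ∀ d : ℝ, 0 < d → 3 * M ≤ d →
      Disjoint (Metric.ball (0 : EuclideanSpace ℝ (Fin n)) (2 * M))
        (Metric.ball x (d / 2)) →
      (∫ ζ in {ζ : EuclideanSpace ℝ (Fin n) |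
          ζ ∈ Metric.ball (0 : EuclideanSpace ℝ (Fin n)) (2 * ‖x‖) ∧
          ζ ∉ Metric.ball (0 : EuclideanSpace ℝ (Fin n)) (2 * M) ∧
          ‖ζ‖ ≤ ‖ζ - x‖},
          1 / (‖ζ‖ ^ n * ‖ζ - x‖ ^ n))
        ≤ C * (1 / ‖x‖ ^ n) * Real.log (‖x‖ / M) := by
  classical
  have hnpos : 0 < n := by omega
  have hdim : Module.finrank ℝ (EuclideanSpace ℝ (Fin n)) = n := by
    simp [finrank_euclideanSpace]
  haveI : Nontrivial (EuclideanSpace ℝ (Fin n)) :=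
    Module.nontrivial_of_finrank_pos (R := ℝ) (by rw [hdim]; exact hnpos)
  set κ : ℝ := (n : ℝ) * (volume (Metric.ball (0 : EuclideanSpace ℝ (Fin n)) 1)).toReal with hκ
  have hκpos : 0 < κ := by
    apply mul_pos (by positivity)
    rw [ENNReal.toReal_pos_iff]
    exact ⟨Metric.measure_ball_pos _ _ one_pos, measure_ball_lt_top⟩
  refine ⟨2 ^ n * κ, by positivity, ?_⟩
  intro M hM x hx d hd hd2 hdisj
  have hxpos : 0 < ‖x‖ := lt_of_lt_of_le (by linarith) hx
  set a : ℝ := 2 * M with ha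
  set b : ℝ := 2 * ‖x‖ with hb
  have hapos : 0 < a := by positivity
  have hab : a < b := by simp only [ha, hb]; nlinarith
  set f : ℝ → ℝ := Set.indicator (Set.Ico a b) (fun y => 1 / y ^ n) with hf
  set g : EuclideanSpace ℝ (Fin n) → ℝ := fun ζ => (2 ^ n / ‖x‖ ^ n) * f ‖ζ‖ with hg
  set A : Set (EuclideanSpace ℝ (Fin n)) := {ζ : EuclideanSpace ℝ (Fin n) |
      ζ ∈ Metric.ball (0 : EuclideanSpace ℝ (Fin n)) (2 * ‖x‖) ∧
      ζ ∉ Metric.ball (0 : EuclideanSpace ℝ (Fin n)) (2 * M) ∧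
      ‖ζ‖ ≤ ‖ζ - x‖} with hA
  have hAmeas : MeasurableSet A := by
    apply MeasurableSet.inter Metric.isOpen_ball.measurableSet
    apply MeasurableSet.inter Metric.isOpen_ball.measurableSet.compl
    exact measurableSet_le measurable_norm ((measurable_id.sub measurable_const).norm)
  have hf_nonneg : ∀ y, 0 ≤ f y := by
    intro y
    apply Set.indicator_nonneg
    intro z hz
    have hz0 : 0 < z := lt_of_lt_of_le hapos hz.1
    positivity
  have hg_nonneg : ∀ ζ, 0 ≤ g ζ := by
    intro ζ
    rw [hg]
    exact mul_nonneg (by positivity) (hf_nonneg _)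
  -- key pointwise facts on A
  have hA_facts : ∀ ζ ∈ A, a ≤ ‖ζ‖ ∧ ‖ζ‖ < b ∧ ‖x‖ / 2 ≤ ‖ζ - x‖ := by
    intro ζ hζ
    obtain ⟨h1, h2, h3⟩ := hζ
    rw [Metric.mem_ball, dist_zero_right] at h1
    rw [Metric.mem_ball, dist_zero_right, not_lt] at h2
    refine ⟨h2, h1, ?_⟩
    have : ‖x‖ ≤ ‖ζ‖ + ‖ζ - x‖ := by
      calc ‖x‖ = ‖ζ - (ζ - x)‖ := by rw [sub_sub_cancel]
        _ ≤ ‖ζ‖ + ‖ζ - x‖ := norm_sub_le _ _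
    linarith
  -- the integrand is bounded by g on A
  have hbound : ∀ ζ ∈ A, 1 / (‖ζ‖ ^ n * ‖ζ - x‖ ^ n) ≤ g ζ := by
    intro ζ hζ
    obtain ⟨h1, h2, h3⟩ := hA_facts ζ hζ
    have hζpos : 0 < ‖ζ‖ := lt_of_lt_of_le hapos h1
    have hζx : 0 < ‖ζ - x‖ := lt_of_lt_of_le (by positivity) h3
    have hfval : f ‖ζ‖ = 1 / ‖ζ‖ ^ n := by
      rw [hf, Set.indicator_of_mem (Set.mem_Ico.mpr ⟨h1, h2⟩)]
    rw [hg]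
    simp only [hfval]
    rw [div_mul_div_comm, mul_one, div_le_div_iff₀ (by positivity) (by positivity)]
    have hkey : ‖x‖ ^ n ≤ 2 ^ n * ‖ζ - x‖ ^ n := by
      have hle : (‖x‖ / 2) ^ n ≤ ‖ζ - x‖ ^ n := pow_le_pow_left₀ (by positivity) h3 n
      rw [div_pow] at hle
      have h2pow : (0:ℝ) < 2 ^ n := by positivity
      calc ‖x‖ ^ n = 2 ^ n * (‖x‖ ^ n / 2 ^ n) := by field_simp
        _ ≤ 2 ^ n * ‖ζ - x‖ ^ n := mul_le_mul_of_nonneg_left hle h2pow.le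
    nlinarith [pow_pos hζpos n, pow_pos hζx n]
  -- g is integrable
  have hg_meas : Measurable g := by
    apply Measurable.const_mul
    exact (Measurable.indicator (by fun_prop) measurableSet_Ico).comp (by fun_prop)
  have hg_int : Integrable g := by
    have hconst : Integrable (Set.indicator (Metric.closedBall (0 : EuclideanSpace ℝ (Fin n)) b)
        (fun _ => (2 ^ n / ‖x‖ ^ n) * (1 / a ^ n))) volume := by
      rw [integrable_indicator_iff measurableSet_closedBall]
      exact integrableOn_const measure_closedBall_lt_top.ne
    refine hconst.mono' hg_meas.aestronglyMeasurable ?_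
    filter_upwards with ζ
    rw [Real.norm_eq_abs, abs_of_nonneg (hg_nonneg ζ)]
    show 2 ^ n / ‖x‖ ^ n * Set.indicator (Set.Ico a b) (fun y => 1 / y ^ n) ‖ζ‖ ≤ _
    by_cases hmem : ‖ζ‖ ∈ Set.Ico a b
    · have hζball : ζ ∈ Metric.closedBall (0 : EuclideanSpace ℝ (Fin n)) b := by
        rw [Metric.mem_closedBall, dist_zero_right]
        exact hmem.2.le
      rw [Set.indicator_of_mem hζball, Set.indicator_of_mem hmem]
      apply mul_le_mul_of_nonneg_left _ (by positivity)
      apply div_le_div_of_nonneg_left one_pos.le (by positivity)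
      exact pow_le_pow_left₀ hapos.le hmem.1 n
    · rw [Set.indicator_of_notMem hmem, mul_zero]
      apply Set.indicator_nonneg
      intro z hz
      exact mul_nonneg (by positivity) (one_div_nonneg.2 (pow_nonneg hapos.le n))
  have hgA_int : IntegrableOn g A := hg_int.integrableOn
  have hhA_int : IntegrableOn (fun ζ : EuclideanSpace ℝ (Fin n) =>
      1 / (‖ζ‖ ^ n * ‖ζ - x‖ ^ n)) A := by
    refine hgA_int.mono' ?_ ?_
    · apply Measurable.aestronglyMeasurable
      fun_prop
    · filter_upwards [ae_restrict_mem hAmeas] with ζ hζ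
      rw [Real.norm_eq_abs, abs_of_nonneg (by positivity)]
      exact hbound ζ hζ
  -- chain of inequalities
  have step1 : (∫ ζ in A, 1 / (‖ζ‖ ^ n * ‖ζ - x‖ ^ n)) ≤ ∫ ζ in A, g ζ :=
    setIntegral_mono_on hhA_int hgA_int hAmeas hbound
  have step2 : (∫ ζ in A, g ζ) ≤ ∫ ζ, g ζ :=
    setIntegral_le_integral hg_int (Filter.Eventually.of_forall hg_nonneg)
  -- compute the full integral
  have hcalc : (∫ ζ : EuclideanSpace ℝ (Fin n), g ζ)
      = (2 ^ n / ‖x‖ ^ n) * (κ * Real.log (‖x‖ / M)) := by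
    rw [hg]
    simp only
    rw [integral_const_mul]
    congr 1
    rw [integral_fun_norm_addHaar volume f, hdim]
    have hinner : (∫ y in Set.Ioi (0:ℝ), y ^ (n - 1) • f y) = Real.log (‖x‖ / M) := by
      have h1 : ∀ y : ℝ, y ^ (n - 1) • f y
          = Set.indicator (Set.Ico a b) (fun y => y ^ (n - 1) * (1 / y ^ n)) y := by
        intro y
        rw [hf, smul_eq_mul]
        by_cases hy : y ∈ Set.Ico a b
        · rw [Set.indicator_of_mem hy, Set.indicator_of_mem hy]
        · rw [Set.indicator_of_notMem hy, Set.indicator_of_notMem hy, mul_zero]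
      simp_rw [h1]
      rw [setIntegral_indicator measurableSet_Ico]
      have h2 : Set.Ioi (0:ℝ) ∩ Set.Ico a b = Set.Ico a b := by
        apply Set.inter_eq_self_of_subset_right
        intro y hy
        exact lt_of_lt_of_le hapos hy.1
      rw [h2]
      have h3 : (∫ y in Set.Ico a b, y ^ (n - 1) * (1 / y ^ n))
          = ∫ y in Set.Ico a b, 1 / y := by
        apply setIntegral_congr_fun measurableSet_Ico
        intro y hy
        have hypos : 0 < y := lt_of_lt_of_le hapos hy.1
        have hyn : y ^ n = y ^ (n - 1) * y := by
          rw [← pow_succ]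
          congr 1
          omega
        field_simp [hyn]
        exact hyn.symm
      rw [h3, setIntegral_congr_set Ico_ae_eq_Ioc,
        ← intervalIntegral.integral_of_le hab.le, integral_one_div]
      · rw [hb, ha, mul_div_mul_left _ _ (by norm_num : (2:ℝ) ≠ 0)]
      · intro hmem
        rw [Set.mem_uIcc] at hmem
        rcases hmem with ⟨h, _⟩ | ⟨_, h⟩ <;> linarith
    rw [hinner, hκ]
    rw [nsmul_eq_mul, smul_eq_mul]
    simp only [measureReal_def]
    ring
  calc (∫ ζ in A, 1 / (‖ζ‖ ^ n * ‖ζ - x‖ ^ n)) ≤ ∫ ζ, g ζ := le_trans step1 step2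
    _ = (2 ^ n / ‖x‖ ^ n) * (κ * Real.log (‖x‖ / M)) := hcalc
    _ = 2 ^ n * κ * (1 / ‖x‖ ^ n) * Real.log (‖x‖ / M) := by ring
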